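/- Let γ: ℝ → ℝ be nonnegative, even, integrable, and supported in [-1,1]. Then ∫_{t=0}^{1} ∫_{z=t}^{t+1} (2zt − z²) γ(z) dz dt = 0. -/

import Mathlib

set_option maxHeartbeats 800000


open MeasureTheory

theorem stmt_1 (γ : ℝ → ℝ)
    (hnn : ∀ s, 0 ≤ γ s) (heven : ∀ s, γ (-s) = γ s)
    (hint : Integrable γ) (hsupp : ∀ s, 1 < |s| → γ s = 0) :
    (∫ t in (0:ℝ)..1, ∫ z in t..(t+1), (2 * z * t - z^2) * γ z) = 0 := by
  set I : Set ℝ := Set.Ioc (0:ℝ) 1 with hI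
  set μ : Measure ℝ := volume.restrict I with hμ
  haveI : IsFiniteMeasure μ := by
    constructor
    rw [hμ, Measure.restrict_apply_univ, hI, Real.volume_Ioc]
    norm_num
  have hγI : Integrable γ μ := hint.restrict
  -- integrability of the integrand in z, for each fixed t, over all of ℝ
  have hk_int : ∀ t : ℝ, Integrable (fun z => (2 * z * t - z^2) * γ z) volume := by
    intro t
    refine Integrable.mono' (hint.const_mul (2*|t|+1)) ?_ (Filter.Eventually.of_forall ?_)
    · exact (Continuous.aestronglyMeasurable (by fun_prop)).mul hint.1
    · intro z
      rcases le_or_gt |z| 1 with hz | hz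
      · have habs : |2 * z * t - z^2| ≤ 2*|t| + 1 := by
          calc |2 * z * t - z^2| ≤ |2 * z * t| + |z^2| := abs_sub _ _
            _ ≤ 2 * |t| + 1 := by
                rw [abs_mul, abs_mul, abs_pow]
                have h0 : (0:ℝ) ≤ |t| := abs_nonneg t
                have h1 : |z|^2 ≤ 1 := by nlinarith [abs_nonneg z]
                have : |(2:ℝ)| * |z| * |t| ≤ 2 * |t| := by
                  rw [abs_two]
                  nlinarith [abs_nonneg z]
                linarith
        rw [Real.norm_eq_abs, abs_mul, abs_of_nonneg (hnn z)]
        exact mul_le_mul_of_nonneg_right habs (hnn z)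
      · simp [hsupp z hz]
  have hk_ii : ∀ t a b : ℝ, IntervalIntegrable (fun z => (2 * z * t - z^2) * γ z) volume a b :=
    fun t a b => (hk_int t).intervalIntegrable
  -- Step A: the inner integral up to t+1 equals the inner integral up to 1
  have stepA : ∀ t ∈ Set.Ioc (0:ℝ) 1,
      (∫ z in t..(t+1), (2 * z * t - z^2) * γ z) = ∫ z in t..1, (2 * z * t - z^2) * γ z := by
    intro t ht
    rw [← intervalIntegral.integral_add_adjacent_intervals (hk_ii t t 1) (hk_ii t 1 (t+1))]
    have h0 : (∫ z in (1:ℝ)..(t+1), (2 * z * t - z^2) * γ z) = 0 := by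
      rw [intervalIntegral.integral_of_le (by linarith [ht.1])]
      refine setIntegral_eq_zero_of_forall_eq_zero fun z hz => ?_
      have : γ z = 0 := hsupp z (by rw [abs_of_pos (by linarith [hz.1])]; exact hz.1)
      simp [this]
    rw [h0, add_zero]
  -- the kernel F with the triangular indicator
  set F : ℝ → ℝ → ℝ := fun t z => if t < z ∧ z ≤ 1 then (2 * z * t - z^2) * γ z else 0 with hF
  -- measurability of uncurry F
  have hFmeas : AEStronglyMeasurable (Function.uncurry F) (μ.prod μ) := by
    have hS : MeasurableSet {p : ℝ × ℝ | p.1 < p.2 ∧ p.2 ≤ 1} := by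
      refine (measurableSet_lt measurable_fst measurable_snd).inter ?_
      exact measurable_snd measurableSet_Iic
    have hg : AEStronglyMeasurable (fun p : ℝ × ℝ => (2 * p.2 * p.1 - p.2^2) * γ p.2) (μ.prod μ) :=
      (Continuous.aestronglyMeasurable (by fun_prop)).mul hγI.1.comp_snd
    have : Function.uncurry F = Set.indicator {p : ℝ × ℝ | p.1 < p.2 ∧ p.2 ≤ 1}
        (fun p : ℝ × ℝ => (2 * p.2 * p.1 - p.2^2) * γ p.2) := by
      funext p
      simp only [Function.uncurry, hF, Set.indicator, Set.mem_setOf_eq]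
    rw [this]
    exact hg.indicator hS
  -- integrability of uncurry F on the product
  have hbound : Integrable (fun p : ℝ × ℝ => 3 * γ p.2) (μ.prod μ) := by
    have hG : Integrable (fun p : ℝ × ℝ => γ p.2) (μ.prod μ) := by
      have h1 : Integrable γ ((μ.prod μ).map Prod.snd) := by
        rw [Measure.map_snd_prod]
        exact hγI.smul_measure (measure_ne_top μ _)
      exact (integrable_map_measure h1.1 measurable_snd.aemeasurable).1 h1
    exact hG.const_mul 3
  have hFint : Integrable (Function.uncurry F) (μ.prod μ) := by
    refine Integrable.mono' hbound hFmeas ?_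
    have hprod : μ.prod μ = (volume.prod volume).restrict (I ×ˢ I) := by
      rw [hμ, Measure.prod_restrict]
    have hmem : ∀ᵐ p ∂(μ.prod μ), p ∈ I ×ˢ I := by
      rw [hprod]
      exact ae_restrict_mem (measurableSet_Ioc.prod measurableSet_Ioc)
    filter_upwards [hmem] with p hp
    obtain ⟨⟨ht0, ht1⟩, ⟨hz0, hz1⟩⟩ := hp
    simp only [Function.uncurry, hF]
    split_ifs with h
    · rw [Real.norm_eq_abs, abs_mul, abs_of_nonneg (hnn p.2)]
      have habs : |2 * p.2 * p.1 - p.2^2| ≤ 3 := by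
        have h1 : |2 * p.2 * p.1| ≤ 2 := by
          rw [abs_mul, abs_mul, abs_two, abs_of_pos hz0, abs_of_pos ht0]
          nlinarith
        have h2 : |p.2^2| ≤ 1 := by
          rw [abs_pow, abs_of_pos hz0]; nlinarith
        calc |2 * p.2 * p.1 - p.2^2| ≤ |2 * p.2 * p.1| + |p.2^2| := abs_sub _ _
          _ ≤ 3 := by linarith
      nlinarith [hnn p.2]
    · simp [hnn p.2]
  -- rewrite the LHS as a double integral of F over μ × μ
  have key : (∫ t in (0:ℝ)..1, ∫ z in t..(t+1), (2 * z * t - z^2) * γ z)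
      = ∫ t, (∫ z, F t z ∂μ) ∂μ := by
    rw [intervalIntegral.integral_of_le (by norm_num : (0:ℝ) ≤ 1)]
    refine setIntegral_congr_fun measurableSet_Ioc fun t ht => ?_
    rw [stepA t ht, intervalIntegral.integral_of_le ht.2]
    have hsub : Set.Ioc t 1 ⊆ I := Set.Ioc_subset_Ioc (le_of_lt ht.1) le_rfl
    rw [hμ, ← Measure.restrict_restrict_of_subset hsub]
    symm
    calc (∫ z, F t z ∂(volume.restrict I))
        = ∫ z in I, Set.indicator (Set.Ioc t 1) (fun z => (2 * z * t - z^2) * γ z) z := by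
          refine setIntegral_congr_fun measurableSet_Ioc fun z hz => ?_
          simp only [hF, Set.indicator, Set.mem_Ioc]
      _ = ∫ z in I ∩ Set.Ioc t 1, (2 * z * t - z^2) * γ z := by
          rw [setIntegral_indicator measurableSet_Ioc]
      _ = ∫ z in Set.Ioc t 1, (2 * z * t - z^2) * γ z := by
          rw [Set.inter_eq_self_of_subset_right hsub]
      _ = ∫ z, (2 * z * t - z^2) * γ z ∂(volume.restrict I).restrict (Set.Ioc t 1) := by
          rw [Measure.restrict_restrict_of_subset hsub]
  rw [key, integral_integral_swap hFint]
  -- now evaluate the inner integral in t: it vanishes for each z ∈ I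
  have inner_zero : ∀ z ∈ I, (∫ t, F t z ∂μ) = 0 := by
    intro z hz
    have h1 : (∫ t, F t z ∂μ) = ∫ t in I ∩ Set.Iio z, (2 * z * t - z^2) * γ z := by
      rw [hμ, ← setIntegral_indicator measurableSet_Iio]
      refine setIntegral_congr_fun measurableSet_Ioc fun t ht => ?_
      simp only [hF, Set.indicator, Set.mem_Iio]
      by_cases h : t < z
      · simp [h, hz.2]
      · simp [h]
    have h2 : I ∩ Set.Iio z = Set.Ioo 0 z := by
      ext t
      simp only [hI, Set.mem_inter_iff, Set.mem_Ioc, Set.mem_Iio, Set.mem_Ioo]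
      constructor
      · rintro ⟨⟨h0, _⟩, hlt⟩; exact ⟨h0, hlt⟩
      · rintro ⟨h0, hlt⟩; exact ⟨⟨h0, le_trans (le_of_lt hlt) hz.2⟩, hlt⟩
    rw [h1, h2]
    have h3 : (∫ t in Set.Ioo (0:ℝ) z, (2 * z * t - z^2) * γ z)
        = (∫ t in Set.Ioo (0:ℝ) z, (2 * z * t - z^2)) * γ z := integral_mul_const _ _
    have h4 : (∫ t in Set.Ioo (0:ℝ) z, (2 * z * t - z^2)) = 0 := by
      rw [← MeasureTheory.integral_Ioc_eq_integral_Ioo,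
        ← intervalIntegral.integral_of_le (le_of_lt hz.1)]
      have hii1 : IntervalIntegrable (fun t => 2 * z * t) volume 0 z :=
        (Continuous.intervalIntegrable (by fun_prop)) 0 z
      have hii2 : IntervalIntegrable (fun _ : ℝ => z^2) volume 0 z :=
        intervalIntegrable_const
      rw [intervalIntegral.integral_sub hii1 hii2]
      simp only [mul_assoc, intervalIntegral.integral_const_mul, integral_id,
        intervalIntegral.integral_const, smul_eq_mul]
      rw [intervalIntegral.integral_const_mul, integral_id]
      ring
    rw [h3, h4, zero_mul]
  rw [hμ]
  rw [setIntegral_congr_fun measurableSet_Ioc fun z hz => inner_zero z hz]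
  simp
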